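/- If S and R are selfadjoint bounded operators on a complex Hilbert space H, then for every bounded operator X on H, ‖S²X + XR²‖ ≥ 2‖SXR‖. -/

import Mathlib

open NormedSpace

set_option maxHeartbeats 1000000
set_option synthInstance.maxHeartbeats 400000

namespace SelfadjointAGMIAux

variable {H : Type*} [NormedAddCommGroup H] [InnerProductSpace ℂ H] [CompleteSpace H]

local notation "⟪" x ", " y "⟫" => @inner ℂ _ _ x y

noncomputable def E (R : H →L[ℂ] H) (s : ℝ) : H →L[ℂ] H := exp (s • (-(R ^ 2)))

lemma hasDerivAt_E (R : H →L[ℂ] H) (s : ℝ) :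
    HasDerivAt (fun u : ℝ => E R u) (E R s * (-(R ^ 2))) s := by
  have h : HasDerivAt (fun u : ℝ => exp (u • (-(R ^ 2))))
      (exp (s • (-(R ^ 2))) * (-(R ^ 2))) s := hasDerivAt_exp_smul_const _ _
  exact h

lemma E_zero (R : H →L[ℂ] H) : E R 0 = 1 := by simp [E]

lemma commute_E (R M : H →L[ℂ] H) (h : Commute M (R ^ 2)) (s : ℝ) :
    Commute M (E R s) := ((h.neg_right).smul_right s).exp_right

lemma E_comm_apply (R M : H →L[ℂ] H) (h : Commute M (R ^ 2)) (s : ℝ) (x : H) :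
    E R s (M x) = M (E R s x) := by
  have h2 := (commute_E R M h s).symm
  calc E R s (M x) = (E R s * M) x := rfl
    _ = (M * E R s) x := by rw [h2]
    _ = M (E R s x) := rfl

lemma hasDerivAt_E_apply (R : H →L[ℂ] H) (x : H) (s : ℝ) :
    HasDerivAt (fun u : ℝ => E R u x) (-((R ^ 2) (E R s x))) s := by
  have h1 : HasDerivAt (fun u : ℝ => (ContinuousLinearMap.apply ℂ H x) (E R u))
      ((ContinuousLinearMap.apply ℂ H x) (E R s * (-(R ^ 2)))) s :=
    (((ContinuousLinearMap.apply ℂ H x).restrictScalars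
      ℝ).hasFDerivAt).comp_hasDerivAt s (hasDerivAt_E R s)
  have h2 : (ContinuousLinearMap.apply ℂ H x) (E R s * (-(R ^ 2)))
      = -((R ^ 2) (E R s x)) := by
    show (E R s * (-(R ^ 2))) x = -((R ^ 2) (E R s x))
    rw [ContinuousLinearMap.mul_apply, ContinuousLinearMap.neg_apply, map_neg,
      E_comm_apply R (R ^ 2) (Commute.refl _) s x]
  rw [h2] at h1
  exact h1

lemma continuous_E_apply (R : H →L[ℂ] H) (x : H) :
    Continuous fun s : ℝ => E R s x :=
  continuous_iff_continuousAt.2 fun s => (hasDerivAt_E_apply R x s).continuousAt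

lemma sa_inner {A : H →L[ℂ] H} (hA : IsSelfAdjoint A) (x y : H) :
    ⟪A x, y⟫ = ⟪x, A y⟫ := by
  conv_lhs => rw [← hA.adjoint_eq]
  exact ContinuousLinearMap.adjoint_inner_left A y x

lemma hasDerivAt_normE_sq (R : H →L[ℂ] H) (hR : IsSelfAdjoint R) (ζ : H) (s : ℝ) :
    HasDerivAt (fun u : ℝ => ‖E R u ζ‖ ^ 2) (-(2 * ‖E R s (R ζ)‖ ^ 2)) s := by
  set w : ℝ → H := fun u => E R u ζ with hw
  have hderiv : HasDerivAt w (-((R ^ 2) (w s))) s := hasDerivAt_E_apply R ζ s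
  have hinner : HasDerivAt (fun u => ⟪w u, w u⟫)
      (⟪w s, -((R ^ 2) (w s))⟫ + ⟪-((R ^ 2) (w s)), w s⟫) s :=
    hderiv.inner ℂ hderiv
  have hre : HasDerivAt (fun u => RCLike.re (K := ℂ) ⟪w u, w u⟫)
      (RCLike.re (K := ℂ) (⟪w s, -((R ^ 2) (w s))⟫ + ⟪-((R ^ 2) (w s)), w s⟫)) s := by
    have := ((RCLike.reCLM (K := ℂ)).hasFDerivAt).comp_hasDerivAt s hinner
    exact this
  have hfun : (fun u => RCLike.re (K := ℂ) ⟪w u, w u⟫) = fun u : ℝ => ‖E R u ζ‖ ^ 2 := by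
    funext u
    exact inner_self_eq_norm_sq (𝕜 := ℂ) (w u)
  have hsq : (R ^ 2) (w s) = R (R (w s)) := by
    rw [pow_two, ContinuousLinearMap.mul_apply]
  have hval : RCLike.re (K := ℂ) (⟪w s, -((R ^ 2) (w s))⟫ + ⟪-((R ^ 2) (w s)), w s⟫)
      = -(2 * ‖E R s (R ζ)‖ ^ 2) := by
    have h1 : ⟪w s, -((R ^ 2) (w s))⟫ = -⟪R (w s), R (w s)⟫ := by
      rw [inner_neg_right, hsq, ← sa_inner hR (w s) (R (w s))]
    have h2 : ⟪-((R ^ 2) (w s)), w s⟫ = -⟪R (w s), R (w s)⟫ := by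
      rw [inner_neg_left, hsq, sa_inner hR (R (w s)) (w s)]
    have h3 : R (w s) = E R s (R ζ) :=
      (E_comm_apply R R ((Commute.refl R).pow_right 2) s ζ).symm
    rw [h1, h2, h3, map_add, map_neg, inner_self_eq_norm_sq (𝕜 := ℂ)]
    ring
  rw [hfun] at hre
  rwa [hval] at hre

lemma antitone_normE_sq (R : H →L[ℂ] H) (hR : IsSelfAdjoint R) (ζ : H) :
    Antitone (fun s : ℝ => ‖E R s ζ‖ ^ 2) := by
  apply antitone_of_deriv_nonpos
  · exact fun s => (hasDerivAt_normE_sq R hR ζ s).differentiableAt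
  · intro s
    rw [(hasDerivAt_normE_sq R hR ζ s).deriv]
    have : (0:ℝ) ≤ 2 * ‖E R s (R ζ)‖ ^ 2 := by positivity
    linarith

lemma integrable_normE_sq (R : H →L[ℂ] H) (ζ : H) (a b : ℝ) :
    IntervalIntegrable (fun s : ℝ => ‖E R s ζ‖ ^ 2) MeasureTheory.volume a b :=
  (((continuous_E_apply R ζ).norm).pow 2).intervalIntegrable a b

lemma integral_normE_sq_le (R : H →L[ℂ] H) (hR : IsSelfAdjoint R) (ξ : H) (T : ℝ) :
    ∫ s in (0:ℝ)..T, ‖E R s (R ξ)‖ ^ 2 ≤ ‖ξ‖ ^ 2 / 2 := by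
  have hFTC : ∫ s in (0:ℝ)..T, (-(2 * ‖E R s (R ξ)‖ ^ 2))
      = ‖E R T ξ‖ ^ 2 - ‖E R 0 ξ‖ ^ 2 :=
    intervalIntegral.integral_eq_sub_of_hasDerivAt
      (fun s _ => hasDerivAt_normE_sq R hR ξ s)
      (((continuous_const.mul ((continuous_E_apply R (R ξ)).norm.pow 2)).neg).intervalIntegrable 0 T)
  have hneg : ∫ s in (0:ℝ)..T, (-(2 * ‖E R s (R ξ)‖ ^ 2))
      = -(2 * ∫ s in (0:ℝ)..T, ‖E R s (R ξ)‖ ^ 2) := by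
    rw [intervalIntegral.integral_neg, intervalIntegral.integral_const_mul]
  have h0 : ‖E R 0 ξ‖ ^ 2 = ‖ξ‖ ^ 2 := by rw [E_zero]; simp
  have hTnn : (0:ℝ) ≤ ‖E R T ξ‖ ^ 2 := by positivity
  rw [hneg, h0] at hFTC
  nlinarith [hFTC]

/-- The key scalar bound for unit-ball vectors. -/
lemma key (S R : H →L[ℂ] H) (hS : IsSelfAdjoint S) (hR : IsSelfAdjoint R)
    (X : H →L[ℂ] H) (ξ η : H) (hξ : ‖ξ‖ ≤ 1) (hη : ‖η‖ ≤ 1) :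
    ‖⟪X (R ξ), S η⟫‖ ≤ ‖S ^ 2 * X + X * R ^ 2‖ / 2 := by
  set Z := S ^ 2 * X + X * R ^ 2 with hZ
  set u : ℝ → H := fun s => E R s (R ξ) with hu_def
  set v : ℝ → H := fun s => E S s (S η) with hv_def
  set h : ℝ → ℂ := fun s => ⟪X (u s), v s⟫ with hh_def
  have hu : ∀ s, HasDerivAt u (-((R ^ 2) (u s))) s := hasDerivAt_E_apply R (R ξ)
  have hv : ∀ s, HasDerivAt v (-((S ^ 2) (v s))) s := hasDerivAt_E_apply S (S η)
  have hcu : Continuous u := continuous_E_apply R (R ξ)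
  have hcv : Continuous v := continuous_E_apply S (S η)
  have hXu : ∀ s, HasDerivAt (fun t => X (u t)) (X (-((R ^ 2) (u s)))) s := fun s =>
    ((X.restrictScalars ℝ).hasFDerivAt).comp_hasDerivAt s (hu s)
  have hh' : ∀ s, HasDerivAt h (-⟪Z (u s), v s⟫) s := by
    intro s
    have hd : HasDerivAt h
        (⟪X (u s), -((S ^ 2) (v s))⟫ + ⟪X (-((R ^ 2) (u s))), v s⟫) s :=
      (hXu s).inner ℂ (hv s)
    have heq : ⟪X (u s), -((S ^ 2) (v s))⟫ + ⟪X (-((R ^ 2) (u s))), v s⟫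
        = -⟪Z (u s), v s⟫ := by
      have hZapp : Z (u s) = (S ^ 2) (X (u s)) + X ((R ^ 2) (u s)) := by rw [hZ]; rfl
      have hS2 : IsSelfAdjoint (S ^ 2) := hS.pow 2
      rw [map_neg, inner_neg_left, inner_neg_right, hZapp, inner_add_left,
        ← sa_inner hS2 (X (u s)) (v s)]
      ring
    rwa [heq] at hd
  have hch' : Continuous fun s => -⟪Z (u s), v s⟫ :=
    ((Continuous.inner (((Z.restrictScalars ℝ).continuous).comp hcu) hcv)).neg
  have hZnn : (0:ℝ) ≤ ‖Z‖ := norm_nonneg Z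
  have hξ2 : ‖ξ‖ ^ 2 ≤ 1 := by nlinarith [norm_nonneg ξ]
  have hη2 : ‖η‖ ^ 2 ≤ 1 := by nlinarith [norm_nonneg η]
  -- FTC bound
  have hbound : ∀ T : ℝ, 0 ≤ T → ‖h 0‖ ≤ ‖h T‖ + ‖Z‖ / 2 := by
    intro T hT
    have hFTC : ∫ s in (0:ℝ)..T, -⟪Z (u s), v s⟫ = h T - h 0 :=
      intervalIntegral.integral_eq_sub_of_hasDerivAt (fun s _ => hh' s)
        (hch'.intervalIntegrable 0 T)
    have hptwise : ∀ s ∈ Set.Icc (0:ℝ) T,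
        ‖-⟪Z (u s), v s⟫‖ ≤ ‖Z‖ / 2 * (‖u s‖ ^ 2 + ‖v s‖ ^ 2) := by
      intro s _
      rw [norm_neg]
      have h1 : ‖⟪Z (u s), v s⟫‖ ≤ ‖Z (u s)‖ * ‖v s‖ := norm_inner_le_norm _ _
      have h2 : ‖Z (u s)‖ ≤ ‖Z‖ * ‖u s‖ := Z.le_opNorm (u s)
      have h3 : ‖u s‖ * ‖v s‖ ≤ (‖u s‖ ^ 2 + ‖v s‖ ^ 2) / 2 := by
        nlinarith [sq_nonneg (‖u s‖ - ‖v s‖)]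
      have hv0 : (0:ℝ) ≤ ‖v s‖ := norm_nonneg _
      have hu0 : (0:ℝ) ≤ ‖u s‖ := norm_nonneg _
      nlinarith
    have hIcont : Continuous fun s => ‖Z‖ / 2 * (‖u s‖ ^ 2 + ‖v s‖ ^ 2) :=
      continuous_const.mul ((hcu.norm.pow 2).add (hcv.norm.pow 2))
    have hint1 : ‖∫ s in (0:ℝ)..T, -⟪Z (u s), v s⟫‖
        ≤ ∫ s in (0:ℝ)..T, ‖Z‖ / 2 * (‖u s‖ ^ 2 + ‖v s‖ ^ 2) := by
      refine (intervalIntegral.norm_integral_le_integral_norm hT).trans ?_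
      exact intervalIntegral.integral_mono_on hT
        (hch'.norm.intervalIntegrable 0 T) (hIcont.intervalIntegrable 0 T) hptwise
    have hint2 : ∫ s in (0:ℝ)..T, ‖Z‖ / 2 * (‖u s‖ ^ 2 + ‖v s‖ ^ 2) ≤ ‖Z‖ / 2 := by
      rw [intervalIntegral.integral_const_mul,
        intervalIntegral.integral_add (integrable_normE_sq R (R ξ) 0 T)
          (integrable_normE_sq S (S η) 0 T)]
      have hA := integral_normE_sq_le R hR ξ T
      have hB := integral_normE_sq_le S hS η T
      nlinarith
    have hsplit : ‖h 0‖ ≤ ‖h T‖ + ‖∫ s in (0:ℝ)..T, -⟪Z (u s), v s⟫‖ := by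
      have heq : h 0 = h T - ∫ s in (0:ℝ)..T, -⟪Z (u s), v s⟫ := by rw [hFTC]; ring
      rw [heq]
      exact norm_sub_le _ _
    linarith
  -- tail bound
  have htail : ∀ T : ℝ, 1 ≤ T → ‖h T‖ ≤ ‖X‖ * Real.sqrt ((2 * T)⁻¹) * ‖S‖ := by
    intro T hT1
    have hT0 : (0:ℝ) < T := by linarith
    have hmono : ∀ s ∈ Set.Icc (0:ℝ) T, ‖u T‖ ^ 2 ≤ ‖u s‖ ^ 2 := by
      intro s hs
      exact antitone_normE_sq R hR (R ξ) hs.2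
    have hconst : ∫ s in (0:ℝ)..T, ‖u T‖ ^ 2 = T * ‖u T‖ ^ 2 := by
      rw [intervalIntegral.integral_const]
      simp
    have hcomp : T * ‖u T‖ ^ 2 ≤ ‖ξ‖ ^ 2 / 2 := by
      rw [← hconst]
      exact (intervalIntegral.integral_mono_on (le_of_lt hT0)
        (intervalIntegrable_const) (integrable_normE_sq R (R ξ) 0 T) hmono).trans
        (integral_normE_sq_le R hR ξ T)
    have huT2 : ‖u T‖ ^ 2 ≤ (2 * T)⁻¹ := by
      rw [inv_eq_one_div, le_div_iff₀ (by linarith)]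
      nlinarith
    have huT : ‖u T‖ ≤ Real.sqrt ((2 * T)⁻¹) := by
      have hx : ‖u T‖ = Real.sqrt (‖u T‖ ^ 2) := (Real.sqrt_sq (norm_nonneg _)).symm
      rw [hx]
      exact Real.sqrt_le_sqrt huT2
    have hvT : ‖v T‖ ≤ ‖S‖ := by
      have h1 : ‖v T‖ ^ 2 ≤ ‖v 0‖ ^ 2 := antitone_normE_sq S hS (S η) (le_of_lt hT0)
      have h2 : ‖v 0‖ ≤ ‖S‖ := by
        have hv0 : v 0 = S η := by
          show E S 0 (S η) = S η
          rw [E_zero]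
          rfl
        rw [hv0]
        calc ‖S η‖ ≤ ‖S‖ * ‖η‖ := S.le_opNorm η
          _ ≤ ‖S‖ * 1 := mul_le_mul_of_nonneg_left hη (norm_nonneg S)
          _ = ‖S‖ := mul_one _
      nlinarith [norm_nonneg (v T), norm_nonneg (v 0)]
    have h1 : ‖h T‖ ≤ ‖X (u T)‖ * ‖v T‖ := norm_inner_le_norm _ _
    have h2 : ‖X (u T)‖ ≤ ‖X‖ * ‖u T‖ := X.le_opNorm (u T)
    have hXnn : (0:ℝ) ≤ ‖X‖ := norm_nonneg X
    have hvTnn : (0:ℝ) ≤ ‖v T‖ := norm_nonneg _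
    calc ‖h T‖ ≤ ‖X (u T)‖ * ‖v T‖ := h1
      _ ≤ (‖X‖ * ‖u T‖) * ‖v T‖ := mul_le_mul_of_nonneg_right h2 hvTnn
      _ ≤ (‖X‖ * Real.sqrt ((2 * T)⁻¹)) * ‖S‖ := by
          apply mul_le_mul (mul_le_mul_of_nonneg_left huT hXnn) hvT hvTnn (by positivity)
  -- take the limit T → ∞
  have hlim : ‖h 0‖ ≤ ‖Z‖ / 2 := by
    have htendinv : Filter.Tendsto (fun T : ℝ => (2 * T)⁻¹) Filter.atTop (nhds 0) := by
      have h2T : Filter.Tendsto (fun T : ℝ => 2 * T) Filter.atTop Filter.atTop :=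
        Filter.Tendsto.const_mul_atTop (by norm_num) Filter.tendsto_id
      exact tendsto_inv_atTop_zero.comp h2T
    have htendsqrt : Filter.Tendsto (fun T : ℝ => Real.sqrt ((2 * T)⁻¹))
        Filter.atTop (nhds 0) := by
      have h0 := (Real.continuous_sqrt.tendsto 0).comp htendinv
      rw [Real.sqrt_zero] at h0
      exact h0
    have htend : Filter.Tendsto
        (fun T : ℝ => ‖X‖ * Real.sqrt ((2 * T)⁻¹) * ‖S‖ + ‖Z‖ / 2)
        Filter.atTop (nhds (‖Z‖ / 2)) := by
      have h1 : Filter.Tendsto (fun T : ℝ => ‖X‖ * Real.sqrt ((2 * T)⁻¹) * ‖S‖)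
          Filter.atTop (nhds 0) := by
        have := (htendsqrt.const_mul ‖X‖).mul_const ‖S‖
        simpa using this
      have h2 := h1.add (tendsto_const_nhds (x := ‖Z‖ / 2)
        (f := Filter.atTop (α := ℝ)))
      simpa using h2
    refine ge_of_tendsto htend ?_
    filter_upwards [Filter.eventually_ge_atTop (1:ℝ)] with T hT1
    have hb := hbound T (by linarith)
    have ht := htail T hT1
    linarith
  -- identify h 0
  have h0eq : h 0 = ⟪X (R ξ), S η⟫ := by
    show ⟪X (E R 0 (R ξ)), E S 0 (S η)⟫ = ⟪X (R ξ), S η⟫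
    rw [E_zero, E_zero]
    rfl
  rwa [h0eq] at hlim

/-- Scaled version for arbitrary vectors. -/
lemma key' (S R : H →L[ℂ] H) (hS : IsSelfAdjoint S) (hR : IsSelfAdjoint R)
    (X : H →L[ℂ] H) (ξ η : H) :
    ‖⟪X (R ξ), S η⟫‖ ≤ ‖S ^ 2 * X + X * R ^ 2‖ / 2 * (‖ξ‖ * ‖η‖) := by
  rcases eq_or_ne ξ 0 with rfl | hξ0
  · simp
  rcases eq_or_ne η 0 with rfl | hη0
  · simp
  have hξn : (0:ℝ) < ‖ξ‖ := norm_pos_iff.2 hξ0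
  have hηn : (0:ℝ) < ‖η‖ := norm_pos_iff.2 hη0
  set a : H := ((‖ξ‖:ℂ)⁻¹ : ℂ) • ξ with ha
  set b : H := ((‖η‖:ℂ)⁻¹ : ℂ) • η with hb
  have hna : ‖a‖ = 1 := by
    rw [ha, norm_smul, norm_inv]
    simp only [Complex.norm_real, norm_norm]
    field_simp
  have hnb : ‖b‖ = 1 := by
    rw [hb, norm_smul, norm_inv]
    simp only [Complex.norm_real, norm_norm]
    field_simp
  have hξa : ξ = (‖ξ‖ : ℂ) • a := by
    rw [ha, smul_smul, mul_inv_cancel₀ (by exact_mod_cast hξn.ne'), one_smul]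
  have hηb : η = (‖η‖ : ℂ) • b := by
    rw [hb, smul_smul, mul_inv_cancel₀ (by exact_mod_cast hηn.ne'), one_smul]
  have hkey := key S R hS hR X a b (le_of_eq hna) (le_of_eq hnb)
  calc ‖⟪X (R ξ), S η⟫‖
      = ‖⟪X (R ((‖ξ‖ : ℂ) • a)), S ((‖η‖ : ℂ) • b)⟫‖ := by rw [← hξa, ← hηb]
    _ = ‖(starRingEnd ℂ) (‖ξ‖ : ℂ) * ((‖η‖ : ℂ) * ⟪X (R a), S b⟫)‖ := by
        congr 1
        simp only [map_smul, inner_smul_left, inner_smul_right]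
        ring
    _ = ‖ξ‖ * (‖η‖ * ‖⟪X (R a), S b⟫‖) := by
        rw [norm_mul, norm_mul, RCLike.norm_conj]
        simp [Complex.norm_real, norm_norm]
    _ ≤ ‖ξ‖ * (‖η‖ * (‖S ^ 2 * X + X * R ^ 2‖ / 2)) := by
        apply mul_le_mul_of_nonneg_left _ (le_of_lt hξn)
        exact mul_le_mul_of_nonneg_left hkey (le_of_lt hηn)
    _ = ‖S ^ 2 * X + X * R ^ 2‖ / 2 * (‖ξ‖ * ‖η‖) := by ring

end SelfadjointAGMIAux

theorem selfadjoint_agmi (H : Type*) [NormedAddCommGroup H] [InnerProductSpace ℂ H]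
    [CompleteSpace H] (S R : H →L[ℂ] H) (hS : IsSelfAdjoint S) (hR : IsSelfAdjoint R)
    (X : H →L[ℂ] H) :
    ‖S ^ 2 * X + X * R ^ 2‖ ≥ 2 * ‖S * X * R‖ := by
  have hZnn : (0:ℝ) ≤ ‖S ^ 2 * X + X * R ^ 2‖ := norm_nonneg _
  have hop : ‖S * X * R‖ ≤ ‖S ^ 2 * X + X * R ^ 2‖ / 2 := by
    apply ContinuousLinearMap.opNorm_le_bound _ (by positivity)
    intro ξ
    rcases eq_or_ne ((S * X * R) ξ) 0 with hw0 | hw0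
    · rw [hw0, norm_zero]
      positivity
    set w : H := (S * X * R) ξ with hw
    have hwpos : (0:ℝ) < ‖w‖ := norm_pos_iff.2 hw0
    have happ : w = S (X (R ξ)) := by rw [hw]; rfl
    have hinner : (inner ℂ w w) = inner ℂ (X (R ξ)) (S w) := by
      conv_lhs => rw [happ]
      exact SelfadjointAGMIAux.sa_inner hS (X (R ξ)) w
    have hnormsq : ‖(inner ℂ w w)‖ = ‖w‖ ^ 2 := by
      rw [inner_self_eq_norm_sq_to_K (𝕜 := ℂ) w, norm_pow, RCLike.norm_ofReal,
        abs_norm]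
    have hb := SelfadjointAGMIAux.key' S R hS hR X ξ w
    have hsq : ‖w‖ ^ 2 ≤ ‖S ^ 2 * X + X * R ^ 2‖ / 2 * (‖ξ‖ * ‖w‖) := by
      rw [← hnormsq, hinner]
      exact hb
    have hfin : ‖w‖ ≤ ‖S ^ 2 * X + X * R ^ 2‖ / 2 * ‖ξ‖ := by
      nlinarith
    exact hfin
  linarith
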